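/- Fix k ≥ 2 and a simple k-power w_1 of length n. Define w_{i+1} = cyc_0(w_i) a_i cyc_{n^{i-1}}(w_i) a_i ⋯ cyc_{(n-1)n^{i-1}}(w_i) a_i, with a_i a fresh letter not occurring in w_i. Then for every i ≥ 1, w_i is a simple k-power. -/

import Mathlib

/-- `p^k`: the word `p` concatenated `k` times. -/
def listPow {α : Type*} (p : List α) (k : ℕ) : List α := (List.replicate k p).flatten

/-- A `k`-power is a nonempty word of the form `p^k`. -/
def IsKPower {α : Type*} (k : ℕ) (w : List α) : Prop := ∃ p : List α, p ≠ [] ∧ w = listPow p k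

/-- A simple `k`-power: a `k`-power none of whose proper factors is a `k`-power. -/
def SimpleKPower {α : Type*} (k : ℕ) (w : List α) : Prop :=
  IsKPower k w ∧ ∀ y : List α, y <:+: w → y ≠ w → ¬ IsKPower k y

/-- The `i`-th partial conjugate: shift left cyclically by `i`, then drop the last symbol. -/
def cyc {α : Type*} (i : ℕ) (w : List α) : List α := (w.rotate i).dropLast

/-- The recursive construction: `wrec w1 a n i` is the word `w_{i+1}` of the paper, i.e.
`wrec w1 a n 0 = w_1` and
`w_{i+1} = cyc_0(w_i) a_i cyc_{n^{i-1}}(w_i) a_i ⋯ cyc_{(n-1)n^{i-1}}(w_i) a_i`. -/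
def wrec {α : Type*} (w1 : List α) (a : ℕ → α) (n : ℕ) : ℕ → List α
  | 0 => w1
  | i + 1 => (List.ofFn fun j : Fin n => cyc (j.val * n ^ i) (wrec w1 a n i) ++ [a (i + 1)]).flatten

namespace SKPaux
variable {α : Type*}

theorem gci {w : List α} {i j : ℕ} (h : i = j) (hi : i < w.length) (hj : j < w.length) :
    w[i] = w[j] := by subst h; rfl



theorem length_listPow (p : List α) (k : ℕ) : (listPow p k).length = k * p.length := by
  induction k with
  | zero => simp [listPow]
  | succ k ih =>
    simp only [listPow, List.replicate_succ, List.flatten_cons, List.length_append]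
    rw [show (List.replicate k p).flatten = listPow p k from rfl, ih]; ring

theorem listPow_succ (p : List α) (k : ℕ) : listPow p (k+1) = p ++ listPow p k := by
  simp [listPow, List.replicate_succ]

theorem getElem_listPow (p : List α) (k v : ℕ) (hv : v < (listPow p k).length)
    (h2 : v % p.length < p.length) :
    (listPow p k)[v] = p[v % p.length] := by
  induction k generalizing v with
  | zero => simp [listPow] at hv
  | succ k ih =>
    have hv' : v < (p ++ listPow p k).length := by rw [← listPow_succ]; exact hv
    rw [List.getElem_of_eq (listPow_succ p k)]
    rcases lt_or_ge v p.length with h | h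
    · rw [List.getElem_append_left h]
      congr 1
      exact (Nat.mod_eq_of_lt h).symm
    · rw [List.getElem_append_right h]
      have hv2 : v - p.length < (listPow p k).length := by
        simp only [List.length_append] at hv'; omega
      rw [ih (v - p.length) hv2 (Nat.mod_lt _ (by omega))]
      congr 1
      conv_rhs => rw [show v = (v - p.length) + p.length by omega]
      rw [Nat.add_mod_right]

/-- occurrence of `y` in `w` at position `s` -/
def OccAt (y w : List α) (s : ℕ) : Prop :=
  s + y.length ≤ w.length ∧ ∀ l (hl : l < y.length) (hw : s + l < w.length), y[l] = w[s + l]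

theorem listPow_ne_nil {p : List α} (hp : p ≠ []) {k : ℕ} (hk : 0 < k) : listPow p k ≠ [] := by
  have : (listPow p k).length ≠ 0 := by
    rw [length_listPow]
    have := List.length_pos_iff.2 hp
    positivity
  exact fun h => this (by simp [h])

theorem occAt_of_infix {y w : List α} (h : y <:+: w) : ∃ s, OccAt y w s := by
  obtain ⟨u, v, huv⟩ := h
  subst huv
  have hlen : (u ++ y ++ v).length = u.length + (y.length + v.length) := by simp
  refine ⟨u.length, by omega, ?_⟩
  intro l hl hw
  rw [List.getElem_of_eq (show u ++ y ++ v = u ++ (y ++ v) by simp)]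
  rw [List.getElem_append_right (by omega)]
  simp only [Nat.add_sub_cancel_left]
  rw [List.getElem_append_left hl]

theorem infix_of_occAt {y w : List α} {s : ℕ} (h : OccAt y w s) : y <:+: w := by
  obtain ⟨hs, hocc⟩ := h
  have hy : y = (w.drop s).take y.length := by
    apply List.ext_getElem
    · simp; omega
    · intro l h1 h2
      rw [List.getElem_take, List.getElem_drop]
      exact hocc l h1 (by omega)
  rw [hy]
  exact ((List.take_prefix _ _).isInfix).trans ((List.drop_suffix _ _).isInfix)

theorem rot_fix_false {k : ℕ} (hk : 2 ≤ k) {w : List α} (hw : SimpleKPower k w) {r : ℕ}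
    (hr0 : 0 < r) (hrm : k * r < w.length) (hrot : w.rotate r = w) : False := by
  have hrm' : r < w.length := by
    have : r ≤ k * r := Nat.le_mul_of_pos_left r (by omega)
    omega
  have hmpos : 0 < w.length := by omega
  have hstep : ∀ u, ∀ (h1 : u < w.length) (h2 : (u + r) % w.length < w.length),
      w[u] = w[(u + r) % w.length] := by
    intro u h1 h2
    rw [List.getElem_of_eq hrot.symm h1, List.getElem_rotate]
  have hiter : ∀ j u, ∀ (h1 : u < w.length) (h2 : (u + r * j) % w.length < w.length),
      w[u] = w[(u + r * j) % w.length] := by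
    intro j
    induction j with
    | zero =>
      intro u h1 h2
      exact gci (by rw [Nat.mul_zero, Nat.add_zero, Nat.mod_eq_of_lt h1]) _ _
    | succ j ih =>
      intro u h1 h2
      have e1 : (u + r * j) % w.length < w.length := Nat.mod_lt _ hmpos
      rw [ih u h1 e1, hstep _ e1 (Nat.mod_lt _ hmpos)]
      refine gci ?_ _ _
      rw [Nat.mod_add_mod, Nat.mul_succ, ← Nat.add_assoc]
  have hgpos : 0 < Nat.gcd r w.length := Nat.gcd_pos_of_pos_left _ hr0
  have hgr : Nat.gcd r w.length ≤ r := Nat.gcd_le_left _ hr0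
  set g := Nat.gcd r w.length with hgdef
  obtain ⟨j, -, hj⟩ := Nat.exists_mul_mod_eq_gcd (show Nat.gcd r w.length < w.length by omega)
  rw [← hgdef] at hj
  have hgstep : ∀ u, ∀ (h1 : u < w.length) (h2 : (u + g) % w.length < w.length),
      w[u] = w[(u + g) % w.length] := by
    intro u h1 h2
    rw [hiter j u h1 (Nat.mod_lt _ hmpos)]
    refine gci ?_ _ _
    rw [Nat.add_mod, hj, Nat.add_mod u g, Nat.mod_eq_of_lt (show g < w.length by omega)]
  have hdown : ∀ u, ∀ (h1 : u < w.length) (h2 : u % g < w.length), w[u] = w[u % g] := by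
    intro u
    induction u using Nat.strong_induction_on with
    | _ u ih =>
      intro h1 h2
      rcases lt_or_ge u g with h | h
      · exact gci (Nat.mod_eq_of_lt h).symm _ _
      · have h3 : u - g < w.length := by omega
        have h4 : ((u - g) + g) % w.length = u := by
          rw [Nat.mod_eq_of_lt (by omega)]; omega
        have e2 : w[u - g]'h3 = w[u]'h1 := by
          rw [hgstep (u - g) h3 (by rw [h4]; exact h1)]
          exact gci h4 _ _
        rw [← e2, ih (u - g) (by omega) h3 (lt_trans (Nat.mod_lt _ hgpos) (by omega))]
        refine gci ?_ _ _
        conv_rhs => rw [show u = (u - g) + g by omega, Nat.add_mod_right]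
  have hzlen : (w.take g).length = g := by rw [List.length_take]; omega
  have hzne : (w.take g) ≠ [] := List.ne_nil_of_length_pos (by omega)
  have hkg : k * g ≤ k * r := Nat.mul_le_mul_left k hgr
  have hylen : (listPow (w.take g) k).length = k * g := by rw [length_listPow, hzlen]
  have hocc : OccAt (listPow (w.take g) k) w 0 := by
    constructor
    · rw [hylen]; omega
    · intro l hl hwl
      rw [hylen] at hl
      have e1 : l % (w.take g).length < (w.take g).length := Nat.mod_lt _ (by omega)
      have hlw : l < w.length := by omega
      have hmg : l % g < w.length := lt_trans (Nat.mod_lt _ hgpos) (by omega)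
      rw [getElem_listPow _ k l (by rw [hylen]; exact hl) e1]
      rw [List.getElem_take]
      refine (gci (show l % (List.take g w).length = l % g by rw [hzlen]) _ hmg).trans ?_
      exact ((hdown l hlw hmg).symm).trans (gci (by omega) _ _)
  have hne : listPow (w.take g) k ≠ w := by
    intro h
    have := congrArg List.length h
    rw [hylen] at this
    omega
  exact hw.2 _ (infix_of_occAt hocc) hne ⟨_, hzne, rfl⟩

theorem rotate_simple {k : ℕ} (hk : 2 ≤ k) {w : List α} (hw : SimpleKPower k w) (r : ℕ) :
    SimpleKPower k (w.rotate r) := by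
  obtain ⟨⟨p, hp, hwp⟩, hsimp⟩ := hw
  have hq : 0 < p.length := List.length_pos_iff.2 hp
  have hmlen : w.length = k * p.length := by rw [hwp, length_listPow]
  have hkq : k * p.length = p.length + (k-1) * p.length := by
    have : (k-1) * p.length + p.length = k * p.length := by
      rw [Nat.sub_one_mul]
      have : p.length ≤ k * p.length := Nat.le_mul_of_pos_left _ (by omega)
      omega
    omega
  have hm2q : p.length + p.length ≤ w.length := by
    have : p.length ≤ (k-1) * p.length := Nat.le_mul_of_pos_left _ (by omega)
    omega
  have hdvd : p.length ∣ w.length := ⟨k, by rw [hmlen, Nat.mul_comm]⟩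
  have welem : ∀ v (h : v < w.length), w[v] = p[v % p.length]'(Nat.mod_lt _ hq) := by
    intro v h
    rw [List.getElem_of_eq hwp h,
      getElem_listPow _ _ _ (by rw [← hwp]; exact h) (Nat.mod_lt _ hq)]
  -- F x = p[x % q]
  set F : ℕ → α := fun x => p[x % p.length]'(Nat.mod_lt _ hq) with hF
  have Fcong : ∀ {x y : ℕ}, x % p.length = y % p.length → F x = F y := by
    intro x y h
    exact gci h _ _
  have Fper : ∀ x, F (x + p.length) = F x := fun x => Fcong (Nat.add_mod_right _ _)
  have welemF : ∀ v (h : v < w.length), w[v] = F v := welem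
  have hrotlen : (w.rotate r).length = w.length := List.length_rotate w r
  have rotelem : ∀ v (h : v < w.length), (w.rotate r)[v]'(by omega) = F (v + r) := by
    intro v h
    rw [List.getElem_rotate]
    rw [welemF _ (Nat.mod_lt _ (by omega))]
    exact Fcong (Nat.mod_mod_of_dvd _ hdvd)
  constructor
  · -- IsKPower
    refine ⟨(w.rotate r).take p.length,
      List.ne_nil_of_length_pos (by rw [List.length_take]; omega), ?_⟩
    have htl : ((w.rotate r).take p.length).length = p.length := by
      rw [List.length_take]; omega
    apply List.ext_getElem
    · rw [length_listPow, htl, hrotlen, hmlen]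
    · intro v h1 h2
      have hvm : v < w.length := by omega
      have h3 : v % ((w.rotate r).take p.length).length < ((w.rotate r).take p.length).length := by
        rw [htl]; exact Nat.mod_lt _ hq
      rw [getElem_listPow _ k v h2 h3]
      rw [List.getElem_take]
      have h4 : v % ((w.rotate r).take p.length).length < w.length := by
        rw [htl]
        exact lt_of_lt_of_le (Nat.mod_lt _ hq) (by omega)
      rw [rotelem v hvm, rotelem _ h4]
      refine Fcong ?_
      rw [htl, Nat.mod_add_mod]
  · -- simple part
    intro y hinf hne hyk
    obtain ⟨r0, hr0ne, hyr0⟩ := hyk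
    have hd : 0 < r0.length := List.length_pos_iff.2 hr0ne
    have hylen : y.length = k * r0.length := by rw [hyr0, length_listPow]
    have hlt : y.length < w.length := by
      rcases Nat.lt_or_ge y.length (w.rotate r).length with h | h
      · omega
      · exact absurd (hinf.sublist.eq_of_length (le_antisymm (hinf.sublist.length_le) h)) hne
    set d := r0.length
    set q := p.length
    have hdq : d < q := by
      have : k * d < k * q := by omega
      exact Nat.lt_of_mul_lt_mul_left this
    obtain ⟨s, hs, hocc⟩ := occAt_of_infix hinf
    have hyF : ∀ l (hl : l < k * d), y[l]'(by omega) = F ((s + r) % q + l) := by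
      intro l hl
      rw [hocc l (by omega) (by omega), rotelem (s + l) (by omega)]
      refine Fcong ?_
      rw [Nat.mod_add_mod]
      exact congrArg (· % q) (by omega)
    have hyr0elem : ∀ l (hl : l < k * d), y[l]'(by omega) = r0[l % d]'(Nat.mod_lt _ hd) := by
      intro l hl
      rw [List.getElem_of_eq hyr0 (by omega),
        getElem_listPow _ _ _ (by rw [← hyr0]; omega) (Nat.mod_lt _ hd)]
    set s1 := (s + r) % q with hs1
    have hs1q : s1 < q := Nat.mod_lt _ hq
    rcases le_or_gt (s1 + k * d) w.length with hcase | hcase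
    · -- y occurs inside w itself
      have : OccAt y w s1 := by
        refine ⟨by omega, ?_⟩
        intro l hl hwl
        rw [hyF l (by omega), welemF (s1 + l) (by omega)]
      exact hsimp y (infix_of_occAt this) (by intro h; rw [h] at hylen; omega)
        ⟨r0, hr0ne, hyr0⟩
    · -- crossing case: produce a smaller k-power inside w
      set e := q - d with he
      have hepos : 0 < e := by omega
      have hqde : q = d + e := by omega
      have hkq2 : k * q = k * d + k * e := by rw [hqde, Nat.mul_add]
      have hk1e : (k-1) * e + e = k * e := by
        rw [Nat.sub_one_mul]
        have : e ≤ k * e := Nat.le_mul_of_pos_left _ (by omega)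
        omega
      have hk1d : (k-1) * d + d = k * d := by
        rw [Nat.sub_one_mul]
        have : d ≤ k * d := Nat.le_mul_of_pos_left _ (by omega)
        omega
      have hd_lt_k1d : d ≤ (k-1) * d := Nat.le_mul_of_pos_left _ (by omega)
      -- k*d + s1 > k*q  and s1 < q  ⇒  key inequalities
      have hke_lt_q : k * e < q := by omega
      have hk1e_lt_d : (k-1) * e < d := by omega
      -- period-e property
      have gper : ∀ l, l < (k-1) * d → F (s1 + d + l + e) = F (s1 + d + l) := by
        intro l hl
        have h1 : F (s1 + d + l + e) = F (s1 + l) := by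
          rw [show s1 + d + l + e = (s1 + l) + q by omega]
          exact Fper _
        rw [h1, ← hyF l (by omega)]
        rw [show s1 + d + l = s1 + (l + d) by omega]
        rw [← hyF (l + d) (by omega)]
        rw [hyr0elem l (by omega), hyr0elem (l + d) (by omega)]
        exact gci (Nat.add_mod_right l d).symm _ _
      have gmod : ∀ l, l < k * e → F (s1 + d + l) = F (s1 + d + (l % e)) := by
        intro l
        induction l using Nat.strong_induction_on with
        | _ l ih =>
          intro hl
          rcases Nat.lt_or_ge l e with h | h
          · rw [Nat.mod_eq_of_lt h]
          · have h2 : l - e < (k-1) * d := by omega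
            have h3 : F (s1 + d + l) = F (s1 + d + (l - e)) := by
              rw [show s1 + d + l = s1 + d + (l - e) + e by omega]
              exact gper _ h2
            rw [h3, ih (l - e) (by omega) (by omega)]
            congr 1
            rw [Nat.mod_eq_sub_mod h]
      -- the short k-power
      set z : List α := List.ofFn (fun i : Fin e => F (s1 + d + i.val)) with hz
      have hzlen : z.length = e := by rw [hz, List.length_ofFn]
      have hzne : z ≠ [] := List.ne_nil_of_length_pos (by omega)
      set s2 := (s1 + d) % q with hs2
      have hs2q : s2 < q := Nat.mod_lt _ hq
      have hocc2 : OccAt (listPow z k) w s2 := by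
        constructor
        · rw [length_listPow, hzlen]; omega
        · intro l hl hwl
          rw [length_listPow, hzlen] at hl
          have h1 : l % z.length < z.length := Nat.mod_lt _ (by omega)
          rw [getElem_listPow _ _ _ (by rw [length_listPow, hzlen]; exact hl) h1]
          have h2 : z[l % z.length]'h1 = F (s1 + d + (l % e)) := by
            simp only [hz, List.getElem_ofFn]
            congr 2
            rw [hzlen]
          rw [h2, ← gmod l hl, welemF (s2 + l) (by omega)]
          refine (Fcong ?_).symm
          rw [hs2, Nat.mod_add_mod]
      have hzklen : (listPow z k).length = k * e := by rw [length_listPow, hzlen]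
      refine hsimp (listPow z k) (infix_of_occAt hocc2) ?_ ⟨z, hzne, rfl⟩
      intro hcontra
      have := congrArg List.length hcontra
      rw [hzklen] at this
      omega

theorem length_flatten_blocks {n m : ℕ} (B : Fin n → List α) (hB : ∀ j, (B j).length = m) :
    (List.ofFn B).flatten.length = n * m := by
  induction n with
  | zero => simp
  | succ n ih =>
    rw [List.ofFn_succ, List.flatten_cons, List.length_append, hB 0,
      ih (fun j => B j.succ) (fun j => hB _)]
    ring

theorem getElem_flatten_blocks {n m : ℕ} (B : Fin n → List α) (hB : ∀ j, (B j).length = m)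
    (j l : ℕ) (hj : j < n) (hl : l < m) (h : j * m + l < (List.ofFn B).flatten.length) :
    (List.ofFn B).flatten[j * m + l] = (B ⟨j, hj⟩)[l]'(by rw [hB]; exact hl) := by
  induction n generalizing j with
  | zero => omega
  | succ n ih =>
    rw [List.getElem_of_eq (by rw [List.ofFn_succ, List.flatten_cons]) h]
    rcases j with _ | j
    · have h0 : 0 * m + l < (B 0).length := by rw [hB]; omega
      rw [List.getElem_append_left (by rw [hB]; omega)]
      exact gci (by omega) _ _
    · have hle : (B 0).length ≤ (j+1) * m + l := by
        rw [hB]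
        have : m ≤ (j+1) * m := Nat.le_mul_of_pos_left _ (by omega)
        omega
      rw [List.getElem_append_right hle]
      have e1 : (j+1) * m + l - (B 0).length = j * m + l := by
        rw [hB, Nat.add_mul]
        omega
      have h2 : j * m + l < (List.ofFn fun i : Fin n => B i.succ).flatten.length := by
        rw [length_flatten_blocks _ (fun i => hB i.succ)]
        have h3 : (j+1) * m + l < (n+1) * m := by
          have := List.length_flatten (L := List.ofFn B)
          rw [length_flatten_blocks _ hB] at h
          exact h
        have e2 : (j+1) * m = j * m + m := by rw [Nat.add_mul]; omega
        have e3 : (n+1) * m = n * m + m := by rw [Nat.add_mul]; omega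
        omega
      have := ih (fun i => B i.succ) (fun i => hB i.succ) j (by omega) h2
      refine (gci e1 (by rwa [e1]) h2).trans (this.trans ?_)
      congr 1

theorem length_cyc (x : ℕ) (w : List α) : (cyc x w).length = w.length - 1 := by
  rw [cyc, List.length_dropLast, List.length_rotate]

theorem getElem_cyc (x : ℕ) (w : List α) (l : ℕ) (hl : l < w.length - 1)
    (h2 : (l + x) % w.length < w.length) :
    (cyc x w)[l]'(by rw [length_cyc]; exact hl) = w[(l + x) % w.length] := by
  have h1 : l < (w.rotate x).dropLast.length := by
    rw [List.length_dropLast, List.length_rotate]; exact hl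
  show (w.rotate x).dropLast[l]'h1 = _
  rw [List.getElem_dropLast, List.getElem_rotate]


theorem lt_cancel {a b c : ℕ} (h : a * c < b * c) : a < b := by
  by_contra hc
  push_neg at hc
  exact absurd (Nat.mul_le_mul_right c hc) (not_le.2 h)

theorem mod_solve {q : ℕ} (hq : 0 < q) (base ρ : ℕ) (hρ : ρ < q) :
    ((ρ + q - base % q) % q + base) % q = ρ := by
  have hb : base % q < q := Nat.mod_lt _ hq
  rw [Nat.mod_add_mod]
  have h2 : (ρ + q - base % q + base) % q = (ρ + q - base % q + base % q) % q :=
    (Nat.ModEq.add_left _ (Nat.mod_modEq base q)).symm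
  rw [h2, show ρ + q - base % q + base % q = ρ + q by omega, Nat.add_mod_right,
    Nat.mod_eq_of_lt hρ]

set_option maxHeartbeats 1000000 in
theorem step {k n t δ : ℕ} (hk : 2 ≤ k) (ht : 0 < t) (hδ : 0 < δ) (hnkt : n = k * t)
    {w : List α} (hw : SimpleKPower k w) (hm : w.length = n * δ) {A : α} (hA : A ∉ w) :
    SimpleKPower k (List.ofFn fun j : Fin n => cyc (j.val * δ) w ++ [A]).flatten := by
  obtain ⟨⟨p, hpne, hwp⟩, hsimp⟩ := hw
  have hq0 : 0 < p.length := List.length_pos_iff.2 hpne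
  have hmq : w.length = k * p.length := by rw [hwp, length_listPow]
  set q := p.length with hqdef
  set m := w.length with hmdef
  have hqtδ : q = t * δ := by
    refine Nat.eq_of_mul_eq_mul_left (show 0 < k by omega) ?_
    rw [← hmq, hm, hnkt]; ring
  have h2q : 2 * q ≤ m := by rw [hmq]; exact Nat.mul_le_mul_right q hk
  have hm0 : 0 < m := by omega
  have hqm : q < m := by omega
  have hqdvd : q ∣ m := ⟨k, by rw [hmq]; ring⟩
  -- the function G
  set G : ℕ → α := fun x => p[x % q]'(Nat.mod_lt _ hq0) with hG
  have Gcong : ∀ {x y : ℕ}, x % q = y % q → G x = G y := fun h => gci h _ _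
  have welemG : ∀ v (h : v < m), w[v]'h = G v := by
    intro v h
    rw [List.getElem_of_eq hwp h, getElem_listPow _ _ _ (by rw [← hwp]; exact h) (Nat.mod_lt _ hq0)]
  have hAp : A ∉ p := by
    intro hmem
    apply hA
    rw [hwp, show k = (k-1)+1 by omega, listPow_succ]
    exact List.mem_append_left _ hmem
  -- blocks
  have hBlen : ∀ j : Fin n, (cyc (j.val * δ) w ++ [A]).length = m := by
    intro j
    rw [List.length_append, length_cyc, List.length_singleton]
    omega
  set W := (List.ofFn fun j : Fin n => cyc (j.val * δ) w ++ [A]).flatten with hW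
  have hWlen : W.length = n * m := length_flatten_blocks _ hBlen
  have Welemw : ∀ j l (hj : j < n) (hl : l < m - 1) (h : j * m + l < W.length),
      W[j * m + l]'h = G (l + j * δ) := by
    intro j l hj hl h
    rw [getElem_flatten_blocks _ hBlen j l hj (by omega) h]
    have h1 : l < (cyc (j * δ) w).length := by rw [length_cyc]; omega
    rw [List.getElem_append_left h1]
    rw [getElem_cyc _ _ _ (by omega) (Nat.mod_lt _ hm0)]
    rw [welemG _ (Nat.mod_lt _ hm0)]
    exact Gcong (Nat.mod_mod_of_dvd _ hqdvd)
  have WelemA : ∀ j (hj : j < n) (h : j * m + (m - 1) < W.length),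
      W[j * m + (m - 1)]'h = A := by
    intro j hj h
    rw [getElem_flatten_blocks _ hBlen j (m-1) hj (by omega) h]
    rw [List.getElem_append_right (by rw [length_cyc])]
    simp [length_cyc]
  have Wchar : ∀ v (h : v < W.length), (W[v]'h = A ↔ v % m = m - 1) := by
    intro v h
    have hjn : v / m < n := by
      rw [hWlen] at h
      exact Nat.div_lt_of_lt_mul (by rw [Nat.mul_comm] at h; exact h)
    have hvm : (v / m) * m + v % m = v := by
      rw [Nat.mul_comm]; exact Nat.div_add_mod v m
    have hmod : v % m < m := Nat.mod_lt _ hm0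
    constructor
    · intro hval
      by_contra hne
      have hlm : v % m < m - 1 := by omega
      have e1 : W[v]'h = G (v % m + (v/m) * δ) := by
        refine (gci hvm.symm h (by omega)).trans ?_
        exact Welemw (v/m) (v%m) hjn hlm (by omega)
      rw [e1] at hval
      exact hAp (hval ▸ List.getElem_mem _)
    · intro hmod1
      have e1 : W[v]'h = A := by
        refine (gci (by omega : v = (v/m) * m + (m-1)) h (by omega)).trans ?_
        exact WelemA (v/m) hjn (by omega)
      exact e1
  have htn : t ≤ n := by
    rw [hnkt]
    exact Nat.le_mul_of_pos_left _ (by omega)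
  have hkpow : IsKPower k W := by
    have htm_le : t * m ≤ n * m := Nat.mul_le_mul_right m htn
    have hPlen : (W.take (t*m)).length = t * m := by
      rw [List.length_take, hWlen]
      omega
    have htm0 : 0 < t * m := Nat.mul_pos ht hm0
    refine ⟨W.take (t*m), List.ne_nil_of_length_pos (by omega), ?_⟩
    apply List.ext_getElem
    · rw [length_listPow, hPlen, hWlen, hnkt]
      ring
    · intro v h1 h2
      have hvnm : v < n * m := by rw [← hWlen]; exact h1
      have hjn : v / m < n := Nat.div_lt_of_lt_mul (by rw [Nat.mul_comm] at hvnm; exact hvnm)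
      have hvm : (v / m) * m + v % m = v := by rw [Nat.mul_comm]; exact Nat.div_add_mod v m
      have hlm : v % m < m := Nat.mod_lt _ hm0
      have hjt : (v/m) / t * t + (v/m) % t = v/m := by
        rw [Nat.mul_comm]; exact Nat.div_add_mod (v/m) t
      have hβt : (v/m) % t < t := Nat.mod_lt _ ht
      have hβml : ((v/m) % t) * m + v % m < t * m := by
        have h3 : (((v/m) % t) + 1) * m ≤ t * m := Nat.mul_le_mul_right m (by omega)
        rw [Nat.add_mul] at h3
        omega
      have hvmod : v % (t * m) = ((v/m) % t) * m + v % m := by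
        conv_lhs => rw [← hvm, ← hjt]
        rw [show ((v/m) / t * t + (v/m) % t) * m + v % m
            = ((v/m) % t) * m + v % m + (v/m)/t * (t * m) by ring]
        rw [Nat.add_mul_mod_self_right, Nat.mod_eq_of_lt hβml]
      have hidx : v % (W.take (t*m)).length = ((v/m) % t) * m + v % m := by
        rw [hPlen, hvmod]
      have hβn : (v/m) % t < n := by omega
      have key : W[v]'h1 = W[((v/m) % t) * m + v % m]'(by omega) := by
        rcases Nat.lt_or_ge (v % m) (m-1) with hcase | hcase
        · refine ((gci hvm.symm h1 (by omega)).trans ?_)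
          rw [Welemw (v/m) (v%m) hjn hcase (by omega),
            Welemw ((v/m) % t) (v%m) hβn hcase (by omega)]
          refine Gcong ?_
          have harg : v % m + (v/m) * δ = v % m + ((v/m) % t) * δ + (v/m)/t * q := by
            rw [hqtδ]
            conv_lhs => rw [← hjt]
            ring
          rw [harg, Nat.add_mul_mod_self_right]
        · have hvm1 : v % m = m - 1 := by omega
          refine ((gci (by omega : v = (v/m) * m + (m-1)) h1 (by omega)).trans ?_)
          rw [WelemA (v/m) hjn (by omega)]
          exact ((gci (show ((v/m) % t) * m + v % m = ((v/m) % t) * m + (m-1) by omega)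
            (by omega) (by omega)).trans (WelemA ((v/m) % t) hβn (by omega))).symm
      rw [getElem_listPow _ _ _ h2 (by rw [hidx, hPlen]; exact hβml)]
      rw [List.getElem_take]
      exact key.trans (gci hidx.symm (by omega) (by omega))
  refine ⟨hkpow, ?_⟩
  intro y hinf hne hyk
  obtain ⟨r0, hr0ne, hyr0⟩ := hyk
  have hd0 : 0 < r0.length := List.length_pos_iff.2 hr0ne
  have hylen : y.length = k * r0.length := by rw [hyr0, length_listPow]
  have hlt : y.length < W.length := by
    rcases lt_or_ge y.length W.length with h | h
    · exact h
    · exact absurd (hinf.sublist.eq_of_length (le_antisymm hinf.sublist.length_le h)) hne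
  obtain ⟨s, hs, hocc⟩ := occAt_of_infix hinf
  have yelem : ∀ l (hl : l < k * r0.length),
      y[l]'(by omega) = r0[l % r0.length]'(Nat.mod_lt _ hd0) := by
    intro l hl
    rw [List.getElem_of_eq hyr0 (by omega),
      getElem_listPow _ _ _ (by rw [← hyr0]; omega) (Nat.mod_lt _ hd0)]
  have hdk : r0.length ≤ k * r0.length := Nat.le_mul_of_pos_left _ (by omega)
  have h2d : 2 * r0.length ≤ k * r0.length := Nat.mul_le_mul_right _ hk
  have hkd0 : 0 < k * r0.length := by omega
  by_cases hAy : A ∈ y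
  · -- the factor contains the fresh letter
    have hAr0 : A ∈ r0 := by
      rw [hyr0] at hAy
      obtain ⟨L, hL, hAL⟩ := List.mem_flatten.1 hAy
      rwa [List.eq_of_mem_replicate hL] at hAL
    obtain ⟨o, ho, hro⟩ := List.mem_iff_getElem.1 hAr0
    have hyo : ∀ x (hx : x < k * r0.length), x % r0.length = o →
        ∀ (h : s + x < W.length), W[s + x]'h = A := by
      intro x hx hxo h
      rw [← hocc x (by omega) h, yelem x hx]
      exact (gci hxo _ _).trans hro
    have hc1 : (s + o) % m = m - 1 :=
      (Wchar _ (by omega)).1 (hyo o (by omega) (Nat.mod_eq_of_lt ho) (by omega))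
    have hc2 : (s + o + r0.length) % m = m - 1 := by
      have h1 := (Wchar (s + (o + r0.length)) (by omega)).1
        (hyo (o + r0.length) (by omega)
          (by rw [Nat.add_mod_right, Nat.mod_eq_of_lt ho]) (by omega))
      rwa [show s + (o + r0.length) = s + o + r0.length by omega] at h1
    have hmdvd : m ∣ r0.length := by
      have h1 : (s + o) ≡ (s + o + r0.length) [MOD m] := by
        unfold Nat.ModEq
        rw [hc1, hc2]
      have h2 := (Nat.modEq_iff_dvd' (by omega)).1 h1
      rwa [show s + o + r0.length - (s + o) = r0.length by omega] at h2
    obtain ⟨c, hcd⟩ := hmdvd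
    have hc0 : 0 < c := by
      rcases Nat.eq_zero_or_pos c with h | h
      · rw [h, Nat.mul_zero] at hcd; omega
      · exact h
    have hkceq : k * r0.length = (k * c) * m := by rw [hcd]; ring
    have hkc_n : k * c < n := by
      refine lt_cancel (c := m) ?_
      omega
    have hct : c < t := by
      refine lt_cancel (a := c) (b := t) (c := k) ?_
      have e1 : c * k = k * c := Nat.mul_comm c k
      have e2 : t * k = k * t := Nat.mul_comm t k
      omega
    have hckc : c ≤ k * c := Nat.le_mul_of_pos_left _ (by omega)
    have hk1c_eq : (k-1) * c + c = k * c := by rw [Nat.sub_one_mul]; omega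
    have hskd : s + k * r0.length ≤ n * m := by omega
    -- periodicity transfer to G
    have Hper : ∀ j l (hl : l < m - 1) (h1 : s ≤ j * m + l)
        (h2 : j * m + l + r0.length < s + k * r0.length),
        G (l + j * δ) = G (l + j * δ + c * δ) := by
      intro j l hl h1 h2
      have hjc : (j + c) * m + l = j * m + l + r0.length := by rw [hcd]; ring
      have hjn : j < n := by
        refine lt_cancel (c := m) (b := n) ?_
        omega
      have hjcn : j + c < n := by
        refine lt_cancel (c := m) (b := n) ?_
        omega
      have e1 : y[j*m+l-s]'(by omega) = W[j*m+l]'(by omega) :=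
        (hocc _ (by omega) (by omega)).trans (gci (by omega) _ _)
      have e2 : y[j*m+l-s+r0.length]'(by omega) = W[(j+c)*m+l]'(by omega) :=
        (hocc _ (by omega) (by omega)).trans (gci (by omega) _ _)
      have e3 : y[j*m+l-s]'(by omega) = y[j*m+l-s+r0.length]'(by omega) := by
        rw [yelem _ (by omega), yelem _ (by omega)]
        exact gci (Nat.add_mod_right _ _).symm _ _
      calc G (l + j * δ) = W[j*m+l]'(by omega) := (Welemw j l hjn hl (by omega)).symm
        _ = W[(j+c)*m+l]'(by omega) := (e1.symm.trans e3).trans e2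
        _ = G (l + (j+c) * δ) := Welemw (j+c) l hjcn hl (by omega)
        _ = G (l + j * δ + c * δ) := congrArg G (by ring)
    -- all residues
    have Qrho : ∀ ρ, ρ < q → G ρ = G (ρ + c * δ) := by
      intro ρ hρ
      have sandwich : ∀ j l, l < m - 1 → s ≤ j * m + l →
          j * m + l + r0.length < s + k * r0.length →
          (l + j * δ) % q = ρ → G ρ = G (ρ + c * δ) := by
        intro j l hl h1 h2 hmodeq
        refine (Gcong (by rw [hmodeq, Nat.mod_eq_of_lt hρ])).trans
          ((Hper j l hl h1 h2).trans (Gcong ?_))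
        rw [← Nat.mod_add_mod, hmodeq]
      have hsj : (s/m) * m ≤ s := by
        have := Nat.div_add_mod s m
        have e1 : (s/m) * m = m * (s/m) := Nat.mul_comm _ _
        omega
      have hsmod : (s/m) * m + s % m = s := by
        rw [Nat.mul_comm]; exact Nat.div_add_mod s m
      have hsm' : s % m < m := Nat.mod_lt _ hm0
      by_cases hbig : 2 ≤ (k - 1) * c
      · -- a full block fits
        have hjm : (s/m + 1) * m = (s/m) * m + m := by rw [Nat.add_mul]; omega
        have h2m : 2 * m ≤ ((k-1)*c) * m := Nat.mul_le_mul_right m hbig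
        have hsplitm : ((k-1)*c) * m + c * m = (k*c) * m := by
          rw [← Nat.add_mul, hk1c_eq]
        have hcm : c * m = m * c := Nat.mul_comm _ _
        refine sandwich (s/m + 1) ((ρ + q - ((s/m + 1) * δ) % q) % q) ?_ ?_ ?_
          (mod_solve hq0 _ ρ hρ)
        · have := Nat.mod_lt (ρ + q - ((s/m + 1) * δ) % q) hq0
          omega
        · have := Nat.mod_lt (ρ + q - ((s/m + 1) * δ) % q) hq0
          omega
        · have := Nat.mod_lt (ρ + q - ((s/m + 1) * δ) % q) hq0
          omega
      · -- k = 2 and c = 1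
        have hk1c1 : (k-1) * c = 1 := by
          have h1 : 0 < (k-1) * c := Nat.mul_pos (by omega) hc0
          omega
        obtain ⟨hk1, hc1⟩ := mul_eq_one.1 hk1c1
        have hk2 : k = 2 := by omega
        have hdm : r0.length = m := by rw [hcd, hc1, Nat.mul_one]
        have hm2q' : m = 2 * q := by rw [hmq, hk2]
        have hkd2 : k * r0.length = r0.length + r0.length := by rw [hk2]; ring
        rcases lt_or_ge (s % m) q with hcase1 | hcase2
        · -- agreement window inside block s/m
          refine sandwich (s/m) (s % m + (ρ + q - (s % m + (s/m) * δ) % q) % q) ?_ ?_ ?_ ?_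
          · have := Nat.mod_lt (ρ + q - (s % m + (s/m) * δ) % q) hq0
            omega
          · omega
          · have := Nat.mod_lt (ρ + q - (s % m + (s/m) * δ) % q) hq0
            omega
          · rw [show s % m + (ρ + q - (s % m + (s/m) * δ) % q) % q + (s/m) * δ
                = (ρ + q - (s % m + (s/m) * δ) % q) % q + (s % m + (s/m) * δ) by ring]
            exact mod_solve hq0 _ ρ hρ
        · -- agreement window inside block s/m + 1
          have hjm : (s/m + 1) * m = (s/m) * m + m := by rw [Nat.add_mul]; omega
          refine sandwich (s/m + 1) ((ρ + q - ((s/m + 1) * δ) % q) % q) ?_ ?_ ?_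
            (mod_solve hq0 _ ρ hρ)
          · have := Nat.mod_lt (ρ + q - ((s/m + 1) * δ) % q) hq0
            omega
          · have := Nat.mod_lt (ρ + q - ((s/m + 1) * δ) % q) hq0
            omega
          · have := Nat.mod_lt (ρ + q - ((s/m + 1) * δ) % q) hq0
            omega
    -- rotation invariance and contradiction
    have hrot : w.rotate (c * δ) = w := by
      apply List.ext_getElem (List.length_rotate w _)
      intro u h1 h2
      rw [List.getElem_rotate]
      rw [welemG _ (Nat.mod_lt _ hm0), welemG u h2]
      refine (Gcong (Nat.mod_mod_of_dvd _ hqdvd)).trans ?_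
      have hQ := Qrho (u % q) (Nat.mod_lt _ hq0)
      refine (Gcong (show (u + c * δ) % q = (u % q + c * δ) % q
        from (Nat.mod_add_mod _ _ _).symm)).trans ?_
      exact (hQ.symm.trans (Gcong (Nat.mod_mod_of_dvd _ dvd_rfl)))
    have hcδq : c * δ < q := by
      rw [hqtδ]
      exact Nat.mul_lt_mul_of_pos_right hct hδ
    have hkcδ : k * (c * δ) < k * q := Nat.mul_lt_mul_of_pos_left hcδq (by omega)
    exact rot_fix_false hk ⟨⟨p, hpne, hwp⟩, hsimp⟩ (Nat.mul_pos hc0 hδ) (by omega) hrot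
  · -- the factor avoids the fresh letter
    have hsmod : (s/m) * m + s % m = s := by
      rw [Nat.mul_comm]; exact Nat.div_add_mod s m
    have hsm' : s % m < m := Nat.mod_lt _ hm0
    have hnoA : ∀ v, s ≤ v → v < s + k * r0.length → ∀ h : v < W.length, W[v]'h ≠ A := by
      intro v hv1 hv2 h hval
      apply hAy
      have h3 : y[v - s]'(by omega) = A := by
        rw [hocc (v-s) (by omega) (by omega)]
        exact (gci (by omega) _ _).trans hval
      exact h3 ▸ List.getElem_mem _
    have hble : s + k * r0.length ≤ (s/m) * m + (m - 1) := by
      by_contra hcon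
      push_neg at hcon
      refine hnoA ((s/m) * m + (m-1)) (by omega) (by omega) (by omega) ?_
      refine (Wchar _ (by omega)).2 ?_
      rw [Nat.add_comm, Nat.add_mul_mod_self_right, Nat.mod_eq_of_lt (by omega)]
    have hjn : s/m < n := by
      refine lt_cancel (c := m) (b := n) ?_
      omega
    have hocc2 : OccAt y (w.rotate ((s/m) * δ)) (s - (s/m) * m) := by
      constructor
      · rw [List.length_rotate, hylen]
        omega
      · intro l hl hwl
        rw [hylen] at hl
        rw [hocc l (by omega) (by omega)]
        rw [List.getElem_rotate]
        have hsl : s + l = (s/m) * m + (s % m + l) := by omega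
        have hsm2 : s % m + l < m - 1 := by omega
        refine (gci hsl _ (by omega)).trans ?_
        rw [Welemw (s/m) (s % m + l) hjn hsm2 (by omega)]
        rw [welemG _ (Nat.mod_lt _ hm0)]
        refine Gcong ?_
        rw [show s - (s/m) * m + l + (s/m) * δ = s % m + l + (s/m) * δ by omega]
        rw [Nat.mod_mod_of_dvd _ hqdvd]
    have hrs := rotate_simple hk ⟨⟨p, hpne, hwp⟩, hsimp⟩ ((s/m) * δ)
    refine hrs.2 y (infix_of_occAt hocc2) ?_ ⟨r0, hr0ne, hyr0⟩
    intro hcon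
    have h4 := congrArg List.length hcon
    rw [List.length_rotate, hylen] at h4
    omega



end SKPaux

open SKPaux in
/-- Every word `w_i` of the recursive construction is a simple `k`-power. -/
theorem wrec_simpleKPower {α : Type*} (k : ℕ) (hk : 2 ≤ k) (w1 : List α) (a : ℕ → α) (n : ℕ)
    (hw1 : SimpleKPower k w1) (hn : w1.length = n)
    (hfresh : ∀ i : ℕ, a (i + 1) ∉ wrec w1 a n i) :
    ∀ i : ℕ, SimpleKPower k (wrec w1 a n i) := by
  obtain ⟨p1, hp1ne, hw1p⟩ := hw1.1
  have ht0 : 0 < p1.length := List.length_pos_iff.2 hp1ne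
  have hkt : n = k * p1.length := by rw [← hn, hw1p, length_listPow]
  have hn2 : 2 ≤ n := by
    have : k ≤ k * p1.length := Nat.le_mul_of_pos_right _ ht0
    omega
  have hlen : ∀ i, (wrec w1 a n i).length = n ^ (i+1) := by
    intro i
    induction i with
    | zero =>
      show w1.length = n ^ 1
      rw [pow_one, hn]
    | succ i ih =>
      have hbl : ∀ j : Fin n,
          (cyc (j.val * n^i) (wrec w1 a n i) ++ [a (i+1)]).length = n^(i+1) := by
        intro j
        rw [List.length_append, length_cyc, ih, List.length_singleton]
        have : 0 < n^(i+1) := pow_pos (by omega) _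
        omega
      show (List.ofFn fun j : Fin n =>
        cyc (j.val * n^i) (wrec w1 a n i) ++ [a (i+1)]).flatten.length = n^(i+1+1)
      rw [length_flatten_blocks _ hbl, pow_succ]
      ring
  intro i
  induction i with
  | zero => exact hw1
  | succ i ih =>
    show SimpleKPower k (List.ofFn fun j : Fin n =>
      cyc (j.val * n^i) (wrec w1 a n i) ++ [a (i+1)]).flatten
    refine step hk ht0 (pow_pos (by omega : 0 < n) i) hkt ih ?_ (hfresh i)
    rw [hlen i, pow_succ]
    ring
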